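/- The Einstein–Hilbert Lagrangian L_EH on the bundle of pseudo-Riemannian metrics, defined by L_EH(j²ₓg) = ρ(x)·g^{ij}(x)·(R^g)^h_{ihj}(x) where ρ = √|det(g_{ab})|, is an affine function of the second-order coordinates y_{ab,cd}, with second-order coefficients (L_EH)_{rs}^{ij} = (1/(2−δ_{ij}))·∂L_EH/∂y_{rs,ij} = (1/(1+δ_{rs}))·ρ·(y^{ir}y^{js} + y^{jr}y^{is} − 2y^{rs}y^{ij}) depending only on the fibre coordinates y_{kl} (not on y_{kl,m}); consequently its Poincaré–Cartan form projects onto J¹M. -/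

import Mathlib

noncomputable section

open scoped BigOperators

/-- Fibre coordinates `y_{ab}` of the bundle of pseudo-Riemannian metrics. -/
abbrev Met (n : ℕ) := Fin n → Fin n → ℝ

/-- First-order jet coordinates `y_{ab,c} = ∂_c g_{ab}`. -/
abbrev Met1 (n : ℕ) := Fin n → Fin n → Fin n → ℝ

/-- Second-order jet coordinates `y_{ab,cd} = ∂_c∂_d g_{ab}`. -/
abbrev Met2 (n : ℕ) := Fin n → Fin n → Fin n → Fin n → ℝ

variable {n : ℕ}

/-- The inverse metric components `y^{ij}`. -/
def ginv (y : Met n) : Met n := fun i j => (Matrix.of y)⁻¹ i j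

/-- `ρ = √|det(y_{ab})|`. -/
def ρfun (y : Met n) : ℝ := Real.sqrt |(Matrix.of y).det|

/-- evaluation CLM on Met -/
def ev2 (b a : Fin n) : Met n →L[ℝ] ℝ :=
  (ContinuousLinearMap.proj a).comp
    (ContinuousLinearMap.proj (R := ℝ) (φ := fun _ : Fin n => Fin n → ℝ) b)

def ev3 (a b c : Fin n) : Met1 n →L[ℝ] ℝ :=
  (ContinuousLinearMap.proj c).comp
    ((ContinuousLinearMap.proj b).comp (ContinuousLinearMap.proj (R := ℝ) (φ := fun _ : Fin n => Fin n → Fin n → ℝ) a))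

@[simp] lemma ev2_apply (b a : Fin n) (y : Met n) : ev2 b a y = y b a := rfl
@[simp] lemma ev3_apply (a b c : Fin n) (w : Met1 n) : ev3 a b c w = w a b c := rfl

lemma diffAt_prod {E : Type*} [NormedAddCommGroup E] [NormedSpace ℝ E]
    {ι : Type*} (s : Finset ι) (f : ι → E → ℝ) (x : E)
    (hf : ∀ i ∈ s, DifferentiableAt ℝ (f i) x) :
    DifferentiableAt ℝ (fun x => ∏ i ∈ s, f i x) x := by
  classical
  induction s using Finset.induction_on with
  | empty => simp
  | insert a s hne ih =>
    simp only [Finset.prod_insert hne]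
    exact (hf a (Finset.mem_insert_self a s)).mul
      (ih fun i hi => hf i (Finset.mem_insert_of_mem hi))

lemma diffAt_det {E : Type*} [NormedAddCommGroup E] [NormedSpace ℝ E]
    {m : ℕ} {f : E → Matrix (Fin m) (Fin m) ℝ} {x : E}
    (hf : ∀ i j, DifferentiableAt ℝ (fun x => f x i j) x) :
    DifferentiableAt ℝ (fun x => (f x).det) x := by
  simp only [Matrix.det_apply']
  apply DifferentiableAt.fun_sum
  intro σ _
  exact (differentiableAt_const _).mul (diffAt_prod _ _ _ fun i _ => hf (σ i) i)

lemma diffAt_ginv (y : Met n) (hy : IsUnit (Matrix.of y).det) (k a : Fin n) :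
    DifferentiableAt ℝ (fun y' : Met n => ginv y' k a) y := by
  have hdet : DifferentiableAt ℝ (fun y' : Met n => (Matrix.of y' : Matrix (Fin n) (Fin n) ℝ).det) y :=
    diffAt_det fun i j => (ev2 i j).differentiableAt
  have hadj : DifferentiableAt ℝ
      (fun y' : Met n => ((Matrix.of y').updateRow a (Pi.single k 1)).det) y := by
    apply diffAt_det
    intro i j
    by_cases hia : i = a
    · subst hia
      simp only [Matrix.updateRow_apply, if_pos rfl]
      exact differentiableAt_const _
    · have := (ev2 i j).differentiableAt (x := y)
      simp only [Matrix.updateRow_apply, hia, if_false]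
      exact this
  have : (fun y' : Met n => ginv y' k a) =
      fun y' : Met n => (Matrix.of y').det⁻¹ * ((Matrix.of y').updateRow a (Pi.single k 1)).det := by
    funext y'
    rw [ginv, Matrix.inv_def, Matrix.smul_apply, Matrix.adjugate_apply, Ring.inverse_eq_inv',
      smul_eq_mul]
  rw [this]
  have hne : (Matrix.of y).det ≠ 0 := hy.ne_zero
  exact (hdet.inv hne).mul hadj

/-- Christoffel symbols `Γ^k_{ij}` of the Levi-Civita connection, as functions of
the `1`-jet coordinates of the metric. -/
def Γfun (y : Met n) (y1 : Met1 n) (k i j : Fin n) : ℝ :=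
  (1 / 2) * ∑ a, ginv y k a * (y1 a j i + y1 a i j - y1 i j a)

/-- Formal (total) derivative `∂_l Γ^k_{ij}` on the jet coordinates. -/
def dΓ (y : Met n) (y1 : Met1 n) (y2 : Met2 n) (l k i j : Fin n) : ℝ :=
  fderiv ℝ (fun q : Met n × Met1 n => Γfun q.1 q.2 k i j) (y, y1)
    (fun a b => y1 a b l, fun a b c => y2 a b c l)

lemma fderiv_Γ_snd (y : Met n) (y1 : Met1 n) (hy : IsUnit (Matrix.of y).det)
    (k i j : Fin n) (w : Met1 n) :
    fderiv ℝ (fun q : Met n × Met1 n => Γfun q.1 q.2 k i j) (y, y1) (0, w)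
      = (1 / 2) * ∑ a, ginv y k a * (w a j i + w a i j - w i j a) := by
  classical
  set ℓ : Fin n → (Met1 n →L[ℝ] ℝ) := fun a => ev3 a j i + ev3 a i j - ev3 i j a with hℓ
  have hu : ∀ a : Fin n, HasFDerivAt (fun q : Met n × Met1 n => ginv q.1 k a * ℓ a q.2)
      (ginv y k a • ((ℓ a).comp (ContinuousLinearMap.snd ℝ (Met n) (Met1 n)))
        + (ℓ a y1) • ((fderiv ℝ (fun y' => ginv y' k a) y).comp
            (ContinuousLinearMap.fst ℝ (Met n) (Met1 n)))) (y, y1) := by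
    intro a
    have hc : HasFDerivAt (fun q : Met n × Met1 n => ginv q.1 k a)
        ((fderiv ℝ (fun y' => ginv y' k a) y).comp
          (ContinuousLinearMap.fst ℝ (Met n) (Met1 n))) (y, y1) :=
      by have := ((diffAt_ginv y hy k a).hasFDerivAt).comp (y, y1)
          (hasFDerivAt_fst (𝕜 := ℝ) (E := Met n) (F := Met1 n) (p := (y, y1))); exact this
    have hd : HasFDerivAt (fun q : Met n × Met1 n => ℓ a q.2)
        ((ℓ a).comp (ContinuousLinearMap.snd ℝ (Met n) (Met1 n))) (y, y1) :=
      ((ℓ a).comp (ContinuousLinearMap.snd ℝ (Met n) (Met1 n))).hasFDerivAt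
    exact hc.mul hd
  have hF : HasFDerivAt (fun q : Met n × Met1 n => (1 / 2 : ℝ) * ∑ a, ginv q.1 k a * ℓ a q.2)
      ((1 / 2 : ℝ) • ∑ a : Fin n,
        (ginv y k a • ((ℓ a).comp (ContinuousLinearMap.snd ℝ (Met n) (Met1 n)))
          + (ℓ a y1) • ((fderiv ℝ (fun y' => ginv y' k a) y).comp
              (ContinuousLinearMap.fst ℝ (Met n) (Met1 n))))) (y, y1) := by
    exact (HasFDerivAt.fun_sum fun a _ => hu a).const_mul (1 / 2 : ℝ)
  have heq : (fun q : Met n × Met1 n => Γfun q.1 q.2 k i j)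
      = fun q : Met n × Met1 n => (1 / 2 : ℝ) * ∑ a, ginv q.1 k a * ℓ a q.2 := by
    funext q
    simp [Γfun, hℓ]
  rw [heq, hF.fderiv]
  simp [hℓ, smul_eq_mul, mul_comm]

lemma dΓ_split (y : Met n) (y1 : Met1 n) (y2 : Met2 n) (hy : IsUnit (Matrix.of y).det)
    (l k i j : Fin n) :
    dΓ y y1 y2 l k i j = dΓ y y1 0 l k i j
      + (1 / 2) * ∑ a, ginv y k a * (y2 a j i l + y2 a i j l - y2 i j a l) := by
  have hw : ((fun a b => y1 a b l, fun a b c => y2 a b c l) : Met n × Met1 n)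
      = ((fun a b => y1 a b l, fun a b c => (0 : Met2 n) a b c l) : Met n × Met1 n)
        + (((0 : Met n), fun a b c => y2 a b c l) : Met n × Met1 n) := by
    refine Prod.ext ?_ ?_ <;> funext <;> simp [Prod.fst, Prod.snd]
  rw [dΓ, hw, map_add]
  rw [show (((0 : Met n), fun a b c => y2 a b c l) : Met n × Met1 n)
      = ((0, fun a b c => y2 a b c l) : Met n × Met1 n) from rfl]
  rw [fderiv_Γ_snd y y1 hy k i j (fun a b c => y2 a b c l)]
  rfl
lemma nest4 (f : Fin n → Fin n → Fin n → Fin n → ℝ) :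
    ∑ p : Fin n × Fin n × Fin n × Fin n, f p.1 p.2.1 p.2.2.1 p.2.2.2
      = ∑ a, ∑ b, ∑ c, ∑ d, f a b c d := by
  simp only [Fintype.sum_prod_type]

lemma reindex4 (f F : Fin n → Fin n → Fin n → Fin n → ℝ)
    (e : (Fin n × Fin n × Fin n × Fin n) ≃ (Fin n × Fin n × Fin n × Fin n))
    (h : ∀ p : Fin n × Fin n × Fin n × Fin n,
      f p.1 p.2.1 p.2.2.1 p.2.2.2 = F (e p).1 (e p).2.1 (e p).2.2.1 (e p).2.2.2) :
    (∑ a, ∑ b, ∑ c, ∑ d, f a b c d) = ∑ a, ∑ b, ∑ c, ∑ d, F a b c d := by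
  rw [← nest4, ← nest4]
  exact Fintype.sum_equiv e _ _ h

section algebra
variable (g : Met n) (y2 : Met2 n)

lemma algebra_key (hg : ∀ p q, g p q = g q p)
    (h2ab : ∀ a b c d, y2 a b c d = y2 b a c d) :
    (∑ i, ∑ j, ∑ h, ∑ a, g i j * g h a *
        (y2 a j i h + y2 a i j h - y2 i j a h
          - (y2 a h i j + y2 a i h j - y2 i h a j)))
      = 2 * ∑ a, ∑ b, ∑ c, ∑ d, (g a c * g b d - g a b * g c d) * y2 a b c d := by
  classical
  set P : ℝ := ∑ a, ∑ b, ∑ c, ∑ d, g a c * g b d * y2 a b c d with hP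
  set Q : ℝ := ∑ a, ∑ b, ∑ c, ∑ d, g a b * g c d * y2 a b c d with hQ
  have S1 : (∑ i, ∑ j, ∑ h, ∑ a, g i j * g h a * y2 a j i h) = P := by
    refine reindex4 _ _ ⟨fun p => (p.2.1, p.2.2.2, p.1, p.2.2.1),
      fun q => (q.2.2.1, q.1, q.2.2.2, q.2.1), fun p => rfl, fun q => rfl⟩ fun p => ?_
    obtain ⟨i, j, h, a⟩ := p
    show g i j * g h a * y2 a j i h = g j i * g a h * y2 j a i h
    rw [h2ab a j i h, hg j i, hg a h]
  have S2 : (∑ i, ∑ j, ∑ h, ∑ a, g i j * g h a * y2 a i j h) = P := by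
    refine reindex4 _ _ ⟨fun p => (p.1, p.2.2.2, p.2.1, p.2.2.1),
      fun q => (q.1, q.2.2.1, q.2.2.2, q.2.1), fun p => rfl, fun q => rfl⟩ fun p => ?_
    obtain ⟨i, j, h, a⟩ := p
    show g i j * g h a * y2 a i j h = g i j * g a h * y2 i a j h
    rw [h2ab a i j h, hg a h]
  have S3 : (∑ i, ∑ j, ∑ h, ∑ a, g i j * g h a * y2 i j a h) = Q := by
    refine reindex4 _ _ ⟨fun p => (p.1, p.2.1, p.2.2.2, p.2.2.1),
      fun q => (q.1, q.2.1, q.2.2.2, q.2.2.1), fun p => rfl, fun q => rfl⟩ fun p => ?_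
    obtain ⟨i, j, h, a⟩ := p
    show g i j * g h a * y2 i j a h = g i j * g a h * y2 i j a h
    rw [hg a h]
  have S4 : (∑ i, ∑ j, ∑ h, ∑ a, g i j * g h a * y2 a h i j) = Q := by
    refine reindex4 _ _ ⟨fun p => (p.2.2.2, p.2.2.1, p.1, p.2.1),
      fun q => (q.2.2.1, q.2.2.2, q.2.1, q.1), fun p => rfl, fun q => rfl⟩ fun p => ?_
    obtain ⟨i, j, h, a⟩ := p
    show g i j * g h a * y2 a h i j = g a h * g i j * y2 a h i j
    rw [hg a h]; ring
  have S5 : (∑ i, ∑ j, ∑ h, ∑ a, g i j * g h a * y2 a i h j) = P := by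
    refine reindex4 _ _ ⟨fun p => (p.2.2.2, p.1, p.2.2.1, p.2.1),
      fun q => (q.2.1, q.2.2.2, q.2.2.1, q.1), fun p => rfl, fun q => rfl⟩ fun p => ?_
    obtain ⟨i, j, h, a⟩ := p
    show g i j * g h a * y2 a i h j = g a h * g i j * y2 a i h j
    rw [hg a h]; ring
  have S6 : (∑ i, ∑ j, ∑ h, ∑ a, g i j * g h a * y2 i h a j) = P := by
    refine reindex4 _ _ ⟨fun p => (p.2.2.1, p.1, p.2.2.2, p.2.1),
      fun q => (q.2.1, q.2.2.2, q.1, q.2.2.1), fun p => rfl, fun q => rfl⟩ fun p => ?_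
    obtain ⟨i, j, h, a⟩ := p
    show g i j * g h a * y2 i h a j = g h a * g i j * y2 h i a j
    rw [h2ab i h a j]; ring
  have split : (∑ i, ∑ j, ∑ h, ∑ a, g i j * g h a *
        (y2 a j i h + y2 a i j h - y2 i j a h
          - (y2 a h i j + y2 a i h j - y2 i h a j)))
      = ((∑ i, ∑ j, ∑ h, ∑ a, g i j * g h a * y2 a j i h)
        + (∑ i, ∑ j, ∑ h, ∑ a, g i j * g h a * y2 a i j h)
        - (∑ i, ∑ j, ∑ h, ∑ a, g i j * g h a * y2 i j a h)
        - (∑ i, ∑ j, ∑ h, ∑ a, g i j * g h a * y2 a h i j)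
        - (∑ i, ∑ j, ∑ h, ∑ a, g i j * g h a * y2 a i h j)
        + (∑ i, ∑ j, ∑ h, ∑ a, g i j * g h a * y2 i h a j)) := by
    simp only [← Finset.sum_add_distrib, ← Finset.sum_sub_distrib]
    refine Finset.sum_congr rfl fun i _ => Finset.sum_congr rfl fun j _ =>
      Finset.sum_congr rfl fun h _ => Finset.sum_congr rfl fun a _ => by ring
  have hPQ : (∑ a, ∑ b, ∑ c, ∑ d, (g a c * g b d - g a b * g c d) * y2 a b c d)
      = P - Q := by
    rw [hP, hQ]
    simp only [← Finset.sum_sub_distrib]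
    refine Finset.sum_congr rfl fun a _ => Finset.sum_congr rfl fun b _ =>
      Finset.sum_congr rfl fun c _ => Finset.sum_congr rfl fun d _ => by ring
  rw [split, S1, S2, S3, S4, S5, S6, hPQ]
  ring
end algebra

/-- The curvature tensor
`R^i_{jkl} = ∂_kΓ^i_{jl} − ∂_lΓ^i_{jk} + Γ^a_{jl}Γ^i_{ka} − Γ^a_{jk}Γ^i_{la}`,
as a function of the `2`-jet coordinates of the metric. -/
def Rcurv (y : Met n) (y1 : Met1 n) (y2 : Met2 n) (i j k l : Fin n) : ℝ :=
  dΓ y y1 y2 k i j l - dΓ y y1 y2 l i j k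
    + (∑ a, Γfun y y1 a j l * Γfun y y1 i k a)
    - ∑ a, Γfun y y1 a j k * Γfun y y1 i l a

/-- The Einstein–Hilbert Lagrangian `L_EH = ρ·y^{ij}·R^h_{ihj}` in jet
coordinates. -/
def LEH (y : Met n) (y1 : Met1 n) (y2 : Met2 n) : ℝ :=
  ρfun y * ∑ i, ∑ j, ginv y i j * ∑ h, Rcurv y y1 y2 h i h j

/-- Symmetry of a fibre point. -/
def MetSym (y : Met n) : Prop := ∀ i j, y i j = y j i

def Met1Sym (y1 : Met1 n) : Prop := ∀ a b c, y1 a b c = y1 b a c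

def Met2Sym (y2 : Met2 n) : Prop :=
  ∀ a b c d, y2 a b c d = y2 b a c d ∧ y2 a b c d = y2 a b d c

/-- the Einstein–Hilbert Lagrangian
`L_EH(j²ₓg) = ρ·g^{ij}·(R^g)^h_{ihj}` is an affine function of the second-order
jet coordinates, `L_EH = ρ·Σ(y^{ac}y^{bd} − y^{ab}y^{cd})·y_{ab,cd} + (L_EH)₀`,
with second-order coefficients depending only on the fibre coordinates `y_{kl}`
(not on `y_{kl,m}`); consequently its Poincaré–Cartan form projects onto `J¹M`. -/
theorem statement10 {n : ℕ} :
    ∃ L0 : Met n → Met1 n → ℝ,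
      ∀ (y : Met n) (y1 : Met1 n) (y2 : Met2 n),
        MetSym y → IsUnit (Matrix.of y).det → Met1Sym y1 → Met2Sym y2 →
        LEH y y1 y2 =
          ρfun y * (∑ a, ∑ b, ∑ c, ∑ d,
            (ginv y a c * ginv y b d - ginv y a b * ginv y c d) * y2 a b c d)
            + L0 y y1 := by
  classical
  refine ⟨fun y y1 => LEH y y1 0, ?_⟩
  intro y y1 y2 hsym hy h1 h2
  show LEH y y1 y2 = ρfun y * (∑ a, ∑ b, ∑ c, ∑ d,
      (ginv y a c * ginv y b d - ginv y a b * ginv y c d) * y2 a b c d) + LEH y y1 0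
  have hg : ∀ p q, ginv y p q = ginv y q p := by
    intro p q
    have ht : Matrix.transpose (Matrix.of y) = Matrix.of y := by
      ext a b
      exact hsym b a
    have key : (Matrix.of y)⁻¹ = Matrix.transpose ((Matrix.of y)⁻¹) := by
      rw [Matrix.transpose_nonsing_inv, ht]
    show (Matrix.of y)⁻¹ p q = (Matrix.of y)⁻¹ q p
    conv_lhs => rw [key]
    rw [Matrix.transpose_apply]
  have h2ab : ∀ a b c d, y2 a b c d = y2 b a c d := fun a b c d => (h2 a b c d).1
  have hR : ∀ h i j : Fin n, Rcurv y y1 y2 h i h j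
      = Rcurv y y1 0 h i h j
        + ((1 / 2) * ∑ a, ginv y h a * (y2 a j i h + y2 a i j h - y2 i j a h)
          - (1 / 2) * ∑ a, ginv y h a * (y2 a h i j + y2 a i h j - y2 i h a j)) := by
    intro h i j
    rw [Rcurv, Rcurv, dΓ_split y y1 y2 hy h h i j, dΓ_split y y1 y2 hy j h i h]
    ring
  have hsum : (∑ i, ∑ j, ginv y i j * ∑ h, Rcurv y y1 y2 h i h j)
      = (∑ i, ∑ j, ginv y i j * ∑ h, Rcurv y y1 0 h i h j)
        + ∑ i, ∑ j, ∑ h, ∑ a, (1 / 2) * (ginv y i j * ginv y h a *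
            (y2 a j i h + y2 a i j h - y2 i j a h
              - (y2 a h i j + y2 a i h j - y2 i h a j))) := by
    rw [← Finset.sum_add_distrib]
    refine Finset.sum_congr rfl fun i _ => ?_
    rw [← Finset.sum_add_distrib]
    refine Finset.sum_congr rfl fun j _ => ?_
    have hstep : (∑ h, Rcurv y y1 y2 h i h j)
        = ∑ h, (Rcurv y y1 0 h i h j
          + ((1 / 2) * ∑ a, ginv y h a * (y2 a j i h + y2 a i j h - y2 i j a h)
            - (1 / 2) * ∑ a, ginv y h a * (y2 a h i j + y2 a i h j - y2 i h a j))) :=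
      Finset.sum_congr rfl fun h _ => hR h i j
    rw [hstep, Finset.sum_add_distrib, mul_add]
    congr 1
    rw [Finset.mul_sum]
    refine Finset.sum_congr rfl fun h _ => ?_
    rw [← mul_sub, ← Finset.sum_sub_distrib, Finset.mul_sum, Finset.mul_sum]
    refine Finset.sum_congr rfl fun a _ => by ring
  have halg := algebra_key (ginv y) y2 hg h2ab
  have hB : (∑ i, ∑ j, ∑ h, ∑ a, (1 / 2 : ℝ) * (ginv y i j * ginv y h a *
        (y2 a j i h + y2 a i j h - y2 i j a h
          - (y2 a h i j + y2 a i h j - y2 i h a j))))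
      = ∑ a, ∑ b, ∑ c, ∑ d,
          (ginv y a c * ginv y b d - ginv y a b * ginv y c d) * y2 a b c d := by
    have hfac : (∑ i, ∑ j, ∑ h, ∑ a, (1 / 2 : ℝ) * (ginv y i j * ginv y h a *
          (y2 a j i h + y2 a i j h - y2 i j a h
            - (y2 a h i j + y2 a i h j - y2 i h a j))))
        = (1 / 2 : ℝ) * ∑ i, ∑ j, ∑ h, ∑ a, ginv y i j * ginv y h a *
          (y2 a j i h + y2 a i j h - y2 i j a h
            - (y2 a h i j + y2 a i h j - y2 i h a j)) := by
      simp only [Finset.mul_sum]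
    rw [hfac, halg]
    ring
  rw [LEH, hsum, mul_add, hB, LEH]
  ring
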